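/- Suppose a graph G has 2-vertices x₁, …, x_ℓ pairwise at distance at least 3. Then exhaustive application of the degree-2 contraction rule (P2) reduces the vertex cover budget k by at least ℓ. -/

import Mathlib

open Finset

/-- `I` is an independent set of vertices in `G`. -/
def IsIndep (G : SimpleGraph ℕ) (I : Finset ℕ) : Prop :=
  ∀ u ∈ I, ∀ v ∈ I, ¬ G.Adj u v

open Classical in
/-- The neighborhood of `I` inside the induced subgraph of `G` on `S`. -/
noncomputable def nbrOn (G : SimpleGraph ℕ) (S I : Finset ℕ) : Finset ℕ :=
  S.filter (fun v => v ∉ I ∧ ∃ u ∈ I, G.Adj u v)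

/-- The surplus of `I` inside the induced subgraph of `G` on `S`. -/
noncomputable def surpOn (G : SimpleGraph ℕ) (S I : Finset ℕ) : ℤ :=
  ((nbrOn G S I).card : ℤ) - (I.card : ℤ)

/-- `I` is a critical-set of the induced subgraph of `G` on `S`. -/
def IsCriticalOn (G : SimpleGraph ℕ) (S I : Finset ℕ) : Prop :=
  I ⊆ S ∧ I.Nonempty ∧ IsIndep G I ∧
    ∀ J ⊆ I, J.Nonempty → surpOn G S I ≤ surpOn G S J

/-- A vertex cover instance: a graph on `ℕ`, its (finite) vertex set `S`, and a budget `k`. -/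
structure VCInst where
  G : SimpleGraph ℕ
  S : Finset ℕ
  k : ℤ

/-- Preprocessing rule (P2) applied to the critical-set `I` with surplus `1`: delete
`N[I]`, add a fresh vertex `y` adjacent to `N(N(I))`, and reduce the budget by `|I|`. -/
noncomputable def P2StepWith (A B : VCInst) (I : Finset ℕ) : Prop :=
  IsCriticalOn A.G A.S I ∧ surpOn A.G A.S I = 1 ∧
  ∃ y : ℕ, y ∉ A.S \ (I ∪ nbrOn A.G A.S I) ∧
    B.S = insert y (A.S \ (I ∪ nbrOn A.G A.S I)) ∧
    B.k = A.k - I.card ∧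
    (∀ a ∈ A.S \ (I ∪ nbrOn A.G A.S I), ∀ b ∈ A.S \ (I ∪ nbrOn A.G A.S I),
      (B.G.Adj a b ↔ A.G.Adj a b)) ∧
    (∀ a ∈ A.S \ (I ∪ nbrOn A.G A.S I),
      (B.G.Adj a y ↔ a ∈ nbrOn A.G A.S (nbrOn A.G A.S I)))

/-- The degree-2 contraction rule: rule (P2) applied to a single (degree-2) vertex. -/
noncomputable def Deg2Step (A B : VCInst) : Prop :=
  ∃ v : ℕ, P2StepWith A B {v}

lemma mem_nbrOn {G : SimpleGraph ℕ} {S I : Finset ℕ} {v : ℕ} :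
    v ∈ nbrOn G S I ↔ v ∈ S ∧ v ∉ I ∧ ∃ u ∈ I, G.Adj u v := by
  classical
  simp [nbrOn]

/-- The contracted graph: restrict to `S \ N[v]` and attach `v` (the fresh vertex) to
the second neighborhood of `v`. -/
noncomputable def contractG (G : SimpleGraph ℕ) (S : Finset ℕ) (v : ℕ) : SimpleGraph ℕ where
  Adj a b :=
    (a ∈ S \ ({v} ∪ nbrOn G S {v}) ∧ b ∈ S \ ({v} ∪ nbrOn G S {v}) ∧ G.Adj a b) ∨
    (a ∈ S \ ({v} ∪ nbrOn G S {v}) ∧ b = v ∧ a ∈ nbrOn G S (nbrOn G S {v})) ∨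
    (b ∈ S \ ({v} ∪ nbrOn G S {v}) ∧ a = v ∧ b ∈ nbrOn G S (nbrOn G S {v}))
  symm := by
    refine ⟨fun a b h => ?_⟩
    rcases h with ⟨h1, h2, h3⟩ | h | h
    · exact Or.inl ⟨h2, h1, h3.symm⟩
    · exact Or.inr (Or.inr h)
    · exact Or.inr (Or.inl h)
  loopless := by
    refine ⟨fun a h => ?_⟩
    rcases h with ⟨_, _, h3⟩ | ⟨h1, h2, _⟩ | ⟨h1, h2, _⟩
    · exact G.irrefl h3
    · subst h2; simp at h1
    · subst h2; simp at h1

/-- If `G` has 2-vertices `x₁, …, x_ℓ` pairwise at distance at least 3 (distinct,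
non-adjacent, with no common neighbor), then exhaustive application of the degree-2
contraction rule (P2) reduces the budget by at least `ℓ`. -/
theorem deg2_contractions_reduce_budget (G : SimpleGraph ℕ) (S : Finset ℕ) (k : ℤ)
    (ℓ : ℕ) (x : Fin ℓ → ℕ)
    (hmem : ∀ i, x i ∈ S)
    (hdeg : ∀ i, (nbrOn G S {x i}).card = 2)
    (hfar : ∀ i j, i ≠ j → x i ≠ x j ∧ ¬ G.Adj (x i) (x j) ∧
      ∀ w ∈ S, ¬ (G.Adj (x i) w ∧ G.Adj (x j) w)) :
    ∃ B : VCInst, Relation.ReflTransGen Deg2Step ⟨G, S, k⟩ B ∧ B.k ≤ k - ℓ := by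
  induction ℓ generalizing G S k with
  | zero => exact ⟨⟨G, S, k⟩, Relation.ReflTransGen.refl, by simp⟩
  | succ n ih =>
    set v := x 0 with hv
    have hvS : v ∈ S := hmem 0
    set N : Finset ℕ := nbrOn G S {v} with hN
    set N2 : Finset ℕ := nbrOn G S N with hN2
    set S'' : Finset ℕ := S \ ({v} ∪ N) with hS''
    set G' := contractG G S v with hG'
    set S' : Finset ℕ := insert v S'' with hS'
    have hvS'' : v ∉ S'' := by simp [hS'']
    -- facts about the other vertices
    have hxmem : ∀ j : Fin n, x j.succ ∈ S'' := by
      intro j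
      have h0 := hfar 0 j.succ (Fin.succ_ne_zero j).symm
      simp only [hS'', Finset.mem_sdiff, Finset.mem_union, Finset.mem_singleton]
      refine ⟨hmem j.succ, ?_⟩
      rintro (h | h)
      · exact h0.1 h.symm
      · rw [hN, mem_nbrOn] at h
        obtain ⟨-, -, u, hu, hadj⟩ := h
        simp only [Finset.mem_singleton] at hu
        subst hu
        exact h0.2.1 hadj
    have hxN2 : ∀ j : Fin n, x j.succ ∉ N2 := by
      intro j hmem2
      have h0 := hfar 0 j.succ (Fin.succ_ne_zero j).symm
      rw [hN2, mem_nbrOn] at hmem2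
      obtain ⟨-, -, u, hu, hadj⟩ := hmem2
      rw [hN, mem_nbrOn] at hu
      obtain ⟨huS, -, w, hw, hadj2⟩ := hu
      simp only [Finset.mem_singleton] at hw
      subst hw
      exact h0.2.2 u huS ⟨hadj2, hadj.symm⟩
    -- adjacency in G'
    have hadjS'' : ∀ a ∈ S'', ∀ b ∈ S'', (G'.Adj a b ↔ G.Adj a b) := by
      intro a ha b hb
      constructor
      · rintro (⟨-, -, h⟩ | ⟨-, h2, -⟩ | ⟨-, h2, -⟩)
        · exact h
        · exact absurd (h2 ▸ hb) hvS''
        · exact absurd (h2 ▸ ha) hvS''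
      · intro h
        exact Or.inl ⟨ha, hb, h⟩
    have hadjv : ∀ a ∈ S'', (G'.Adj a v ↔ a ∈ N2) := by
      intro a ha
      constructor
      · rintro (⟨-, h2, -⟩ | ⟨-, -, h3⟩ | ⟨-, h2, -⟩)
        · exact absurd h2 hvS''
        · exact h3
        · exact absurd (h2 ▸ ha) hvS''
      · intro h
        exact Or.inr (Or.inl ⟨ha, rfl, h⟩)
    -- the single step
    have hstep : Deg2Step ⟨G, S, k⟩ ⟨G', S', k - 1⟩ := by
      refine ⟨v, ⟨?_, ?_, ?_, ?_⟩, ?_, v, ?_, rfl, ?_, hadjS'', hadjv⟩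
      · simpa using hvS
      · exact ⟨v, Finset.mem_singleton_self v⟩
      · intro a ha b hb
        simp only [Finset.mem_singleton] at ha hb
        subst ha; subst hb
        exact G.irrefl
      · intro J hJ hJne
        rcases Finset.subset_singleton_iff.mp hJ with h | h
        · exact absurd h (Finset.nonempty_iff_ne_empty.mp hJne)
        · subst h; exact le_refl _
      · simp [surpOn, show #(nbrOn G S {v}) = 2 from hdeg 0]
      · simp
      · simp
    -- remaining vertices satisfy the hypotheses in the new instance
    have key : ∀ j : Fin n, nbrOn G' S' {x j.succ} = nbrOn G S {x j.succ} := by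
      intro j
      ext w
      rw [mem_nbrOn, mem_nbrOn]
      simp only [Finset.mem_singleton]
      constructor
      · rintro ⟨hwS', hwne, u, hu, hadj⟩
        subst hu
        rcases Finset.mem_insert.mp hwS' with hwv | hwS''
        · subst hwv
          rw [hadjv _ (hxmem j)] at hadj
          exact absurd hadj (hxN2 j)
        · rw [hadjS'' _ (hxmem j) _ hwS''] at hadj
          exact ⟨(Finset.mem_sdiff.mp hwS'').1, hwne, _, rfl, hadj⟩
      · rintro ⟨hwS, hwne, u, hu, hadj⟩
        subst hu
        have h0 := hfar 0 j.succ (Fin.succ_ne_zero j).symm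
        have hwS'' : w ∈ S'' := by
          simp only [hS'', Finset.mem_sdiff, Finset.mem_union, Finset.mem_singleton]
          refine ⟨hwS, ?_⟩
          rintro (h | h)
          · subst h; exact h0.2.1 hadj.symm
          · rw [hN, mem_nbrOn] at h
            obtain ⟨-, -, u', hu', hadj2⟩ := h
            simp only [Finset.mem_singleton] at hu'
            subst hu'
            exact h0.2.2 w hwS ⟨hadj2, hadj⟩
        refine ⟨Finset.mem_insert_of_mem hwS'', hwne, _, rfl, ?_⟩
        rw [hadjS'' _ (hxmem j) _ hwS'']
        exact hadj
    obtain ⟨B, hB, hk⟩ := ih G' S' (k - 1) (fun j => x j.succ)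
      (fun j => Finset.mem_insert_of_mem (hxmem j))
      (fun j => by rw [key j]; exact hdeg j.succ)
      (by
        intro i j hij
        have hij' : i.succ ≠ j.succ := fun h => hij (Fin.succ_injective n h)
        obtain ⟨h1, h2, h3⟩ := hfar i.succ j.succ hij'
        refine ⟨h1, ?_, ?_⟩
        · rw [hadjS'' _ (hxmem i) _ (hxmem j)]
          exact h2
        · intro w hw ⟨ha, hb⟩
          rcases Finset.mem_insert.mp hw with hwv | hwS''
          · subst hwv
            rw [hadjv _ (hxmem i)] at ha
            exact hxN2 i ha
          · rw [hadjS'' _ (hxmem i) _ hwS''] at ha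
            rw [hadjS'' _ (hxmem j) _ hwS''] at hb
            exact h3 w (Finset.mem_sdiff.mp hwS'').1 ⟨ha, hb⟩)
    refine ⟨B, Relation.ReflTransGen.head hstep hB, ?_⟩
    push_cast at hk ⊢
    linarith
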